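/- Let 0 < lambda < omega, gamma = omega/lambda, alpha = arcosh(gamma). Define F(w, v) = (w - pi/2)(gamma - sin(w) cosh(v)) - (v - alpha) cos(w) sinh(v). Then there exists epsilon > 0 such that F(w, v) < 0 for all 0 < w < pi/2 and (1 - epsilon) alpha < v < (1 + epsilon) alpha, and F(w, v) > 0 for all pi/2 < w < pi and (1 - epsilon) alpha < v < (1 + epsilon) alpha. -/

import Mathlib

set_option maxHeartbeats 1600000

private lemma aux_cosh_tangent_left {α v : ℝ} (hva : v ≤ α) :
    (α - v) * Real.sinh v ≤ Real.cosh α - Real.cosh v := by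
  set f : ℝ → ℝ := fun t => Real.cosh α - Real.cosh t - (α - t) * Real.sinh t with hf
  have hd : ∀ t : ℝ, HasDerivAt f (-((α - t) * Real.cosh t)) t := by
    intro t
    have h1 : HasDerivAt (fun t : ℝ => α - t) (-1) t := by
      simpa using (hasDerivAt_id t).const_sub α
    have h2 : HasDerivAt (fun t : ℝ => (α - t) * Real.sinh t)
        ((-1) * Real.sinh t + (α - t) * Real.cosh t) t := h1.mul (Real.hasDerivAt_sinh t)
    have h3 : HasDerivAt (fun t : ℝ => Real.cosh α - Real.cosh t) (-Real.sinh t) t := by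
      simpa using (Real.hasDerivAt_cosh t).const_sub (Real.cosh α)
    have := h3.sub h2
    exact this.congr_deriv (by ring)
  have hanti : AntitoneOn f (Set.Iic α) := by
    apply antitoneOn_of_deriv_nonpos (convex_Iic α)
    · exact fun x _ => (hd x).continuousAt.continuousWithinAt
    · exact fun x _ => (hd x).differentiableAt.differentiableWithinAt
    · intro x hx
      rw [interior_Iic, Set.mem_Iio] at hx
      rw [(hd x).deriv]
      have := Real.cosh_pos x
      nlinarith
  have h0 : f α ≤ f v := hanti (Set.mem_Iic.2 hva) (Set.mem_Iic.2 le_rfl) hva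
  have hfα : f α = 0 := by simp [hf]
  rw [hfα] at h0
  simp only [hf] at h0
  linarith

private lemma aux_cosh_tangent_right {α v : ℝ} (hva : α ≤ v) :
    Real.cosh v - Real.cosh α ≤ (v - α) * Real.sinh v := by
  set f : ℝ → ℝ := fun t => (t - α) * Real.sinh t - Real.cosh t + Real.cosh α with hf
  have hd : ∀ t : ℝ, HasDerivAt f ((t - α) * Real.cosh t) t := by
    intro t
    have h1 : HasDerivAt (fun t : ℝ => t - α) 1 t := by
      simpa using (hasDerivAt_id t).sub_const α
    have h2 : HasDerivAt (fun t : ℝ => (t - α) * Real.sinh t)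
        (1 * Real.sinh t + (t - α) * Real.cosh t) t := h1.mul (Real.hasDerivAt_sinh t)
    have := (h2.sub (Real.hasDerivAt_cosh t)).add_const (Real.cosh α)
    exact this.congr_deriv (by ring)
  have hmono : MonotoneOn f (Set.Ici α) := by
    apply monotoneOn_of_deriv_nonneg (convex_Ici α)
    · exact fun x _ => (hd x).continuousAt.continuousWithinAt
    · exact fun x _ => (hd x).differentiableAt.differentiableWithinAt
    · intro x hx
      rw [interior_Ici, Set.mem_Ioi] at hx
      rw [(hd x).deriv]
      have := Real.cosh_pos x
      nlinarith
  have h0 : f α ≤ f v := hmono (Set.mem_Ici.2 le_rfl) (Set.mem_Ici.2 hva) hva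
  have hfα : f α = 0 := by simp [hf]
  rw [hfα] at h0
  simp only [hf] at h0
  linarith

/-- Deceleration/acceleration regions: for `0 < λ < ω`, `γ = ω/λ`,
`α = arcosh γ`, and `F(w,v) = (w - π/2)(γ - sin w cosh v) - (v - α) cos w sinh v`,
there is `ε > 0` such that `F < 0` on `{0 < w < π/2, (1-ε)α < v < (1+ε)α}` and
`F > 0` on `{π/2 < w < π, (1-ε)α < v < (1+ε)α}`. -/
theorem deceleration_acceleration_region (ω lam γ α : ℝ)
    (hlam : 0 < lam) (hweak : lam < ω)
    (hγ : γ = ω / lam)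
    (hα : α = Real.log (γ + Real.sqrt (γ ^ 2 - 1)))
    (F : ℝ → ℝ → ℝ)
    (hF : ∀ w v, F w v =
      (w - Real.pi / 2) * (γ - Real.sin w * Real.cosh v) -
        (v - α) * Real.cos w * Real.sinh v) :
    ∃ ε > 0,
      (∀ w v, 0 < w → w < Real.pi / 2 →
        (1 - ε) * α < v → v < (1 + ε) * α → F w v < 0) ∧
      (∀ w v, Real.pi / 2 < w → w < Real.pi →
        (1 - ε) * α < v → v < (1 + ε) * α → 0 < F w v) := by
  have hγ1 : 1 < γ := by
    rw [hγ]
    rw [lt_div_iff₀ hlam]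
    linarith
  have hs2 : Real.sqrt (γ ^ 2 - 1) ^ 2 = γ ^ 2 - 1 :=
    Real.sq_sqrt (by nlinarith)
  set s := Real.sqrt (γ ^ 2 - 1) with hsdef
  have hsnn : 0 ≤ s := Real.sqrt_nonneg _
  have hsγ : s < γ := by nlinarith
  have hexpα : Real.exp α = γ + s := by
    rw [hα, Real.exp_log (by linarith)]
  have hexpnα : Real.exp (-α) = γ - s := by
    have hmul : (γ + s) * (γ - s) = 1 := by nlinarith
    rw [Real.exp_neg, hexpα]
    field_simp
    nlinarith
  have hcoshα : Real.cosh α = γ := by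
    rw [Real.cosh_eq, hexpα, hexpnα]; ring
  have hαpos : 0 < α := by
    rw [hα]
    exact Real.log_pos (by linarith)
  set ε : ℝ := 1 / (10 * (1 + α)) with hεdef
  have hεpos : 0 < ε := by
    rw [hεdef]; positivity
  have hεmul : ε * (10 * (1 + α)) = 1 := by
    rw [hεdef]; field_simp
  have hεα : ε * α < 1 / 10 := by nlinarith
  have hε1 : ε < 1 / 10 := by nlinarith
  have hpi := Real.pi_pos
  -- the core negative region
  have core : ∀ w v, 0 < w → w < Real.pi / 2 →
      (1 - ε) * α < v → v < (1 + ε) * α → F w v < 0 := by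
    intro w v hw0 hw2 hv1 hv2
    have hv0 : 0 < v := by nlinarith
    have hvub : v - α < 1 / 10 := by nlinarith
    obtain ⟨δ, hδdef⟩ : ∃ δ : ℝ, δ = Real.pi / 2 - w := ⟨_, rfl⟩
    have hδ0 : 0 < δ := by rw [hδdef]; linarith
    have hδπ : δ < Real.pi / 2 := by rw [hδdef]; linarith
    have hsin : Real.cos δ = Real.sin w := by
      rw [hδdef]; exact Real.cos_pi_div_two_sub w
    have hcos : Real.sin δ = Real.cos w := by
      rw [hδdef]; exact Real.sin_pi_div_two_sub w
    rw [hF, ← hsin, ← hcos, ← hcoshα,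
      show w - Real.pi / 2 = -δ by rw [hδdef]; ring]
    have hch := Real.cosh_pos v
    have hsh : 0 < Real.sinh v := Real.sinh_pos_iff.mpr hv0
    have hshch : Real.sinh v < Real.cosh v := by
      nlinarith [Real.cosh_sub_sinh v, Real.exp_pos (-v)]
    have hsδ0 : 0 < Real.sin δ := Real.sin_pos_of_pos_of_lt_pi hδ0 (by linarith)
    have hsδle : Real.sin δ < δ := Real.sin_lt hδ0
    have hcδ1 : Real.cos δ < 1 := by
      have h := Real.cos_lt_cos_of_nonneg_of_le_pi le_rfl (by linarith) hδ0
      rwa [Real.cos_zero] at h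
    have hcδ0 : 0 ≤ Real.cos δ := Real.cos_nonneg_of_mem_Icc ⟨by linarith, hδπ.le⟩
    suffices hG : 0 < δ * (Real.cosh α - Real.cos δ * Real.cosh v)
        + (v - α) * Real.sin δ * Real.sinh v by linarith
    rcases le_or_gt v α with hvle | hvgt
    · -- v ≤ α
      have hA := aux_cosh_tangent_left hvle
      have h1 : δ * ((α - v) * Real.sinh v) ≤ δ * (Real.cosh α - Real.cosh v) :=
        mul_le_mul_of_nonneg_left hA hδ0.le
      have h2 : 0 < δ * ((1 - Real.cos δ) * Real.cosh v) :=
        mul_pos hδ0 (mul_pos (by linarith) hch)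
      have h3 : (α - v) * Real.sin δ * Real.sinh v ≤ (α - v) * δ * Real.sinh v :=
        mul_le_mul_of_nonneg_right
          (mul_le_mul_of_nonneg_left hsδle.le (by linarith)) hsh.le
      linarith [h1, h2, h3]
    · -- α < v
      have hB := aux_cosh_tangent_right hvgt.le
      rcases lt_or_ge δ 1 with hδ1 | hδ1
      · -- δ < 1
        have hs3 : δ - δ ^ 3 / 4 < Real.sin δ := by
          have := Real.sin_gt_sub_cube hδ0
          linarith [pow_pos hδ0 3]
        have hhalf : Real.sin (δ / 2) ^ 2 = 1 / 2 - Real.cos δ / 2 := by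
          have h := Real.sin_sq_eq_half_sub (δ / 2)
          rwa [show 2 * (δ / 2) = δ by ring] at h
        have hs2' : (15 / 32 : ℝ) * δ ≤ Real.sin (δ / 2) := by
          have h := Real.sin_gt_sub_cube (by linarith : 0 < δ / 2)
          have hδ3 : δ ^ 3 ≤ δ := by nlinarith [mul_pos hδ0 hδ0]
          linarith [h, hδ3]
        have hcosb : Real.cos δ ≤ 1 - (225 / 512 : ℝ) * δ ^ 2 := by
          have h0 : (0 : ℝ) ≤ (15 / 32 : ℝ) * δ := by positivity
          linarith [pow_le_pow_left₀ h0 hs2' 2, hhalf]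
        have h1 : δ * (Real.cosh v - Real.cosh α) ≤ δ * ((v - α) * Real.sinh v) :=
          mul_le_mul_of_nonneg_left hB hδ0.le
        have h2 : (v - α) * (δ - δ ^ 3 / 4) * Real.sinh v
            ≤ (v - α) * Real.sin δ * Real.sinh v :=
          mul_le_mul_of_nonneg_right
            (mul_le_mul_of_nonneg_left hs3.le (by linarith)) hsh.le
        have h4a : (v - α) * Real.sinh v ≤ (v - α) * Real.cosh v :=
          mul_le_mul_of_nonneg_left hshch.le (by linarith)
        have h4b : (v - α) * Real.cosh v ≤ (1 / 10 : ℝ) * Real.cosh v :=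
          mul_le_mul_of_nonneg_right (by linarith) hch.le
        have h4 : (v - α) * Real.sinh v ≤ (1 / 10 : ℝ) * Real.cosh v := le_trans h4a h4b
        have h5 : δ ^ 3 * ((v - α) * Real.sinh v)
            ≤ δ ^ 3 * ((1 / 10 : ℝ) * Real.cosh v) :=
          mul_le_mul_of_nonneg_left h4 (by positivity)
        have h6 : δ * ((225 / 512 : ℝ) * δ ^ 2 * Real.cosh v)
            ≤ δ * ((1 - Real.cos δ) * Real.cosh v) :=
          mul_le_mul_of_nonneg_left
            (mul_le_mul_of_nonneg_right (by linarith [hcosb]) hch.le) hδ0.le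
        have h7 : 0 < δ ^ 3 * Real.cosh v := by positivity
        linarith [h1, h2, h5, h6, h7]
      · -- 1 ≤ δ
        have hc1 : Real.cos δ ≤ 2 / 3 := by
          rcases eq_or_lt_of_le hδ1 with h | h
          · rw [← h]; exact Real.cos_one_le.trans (by norm_num)
          · have h2 := Real.cos_lt_cos_of_nonneg_of_le_pi (by norm_num) (by linarith) h
            linarith [Real.cos_one_le]
        have he : Real.exp (1 / 10 : ℝ) < 10 / 9 := by
          have h := Real.add_one_lt_exp (by norm_num : (-1 / 10 : ℝ) ≠ 0)
          have h2 : Real.exp (1 / 10 : ℝ) * Real.exp (-1 / 10 : ℝ) = 1 := by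
            rw [← Real.exp_add]; norm_num
          nlinarith [Real.exp_pos (-1 / 10 : ℝ), Real.exp_pos (1 / 10 : ℝ)]
        have hchv : Real.cosh v < Real.cosh (α + 1 / 10) := by
          rw [Real.cosh_lt_cosh, abs_of_pos hv0, abs_of_pos (by linarith)]
          linarith
        have hsc : Real.sinh α ≤ Real.cosh α := by
          nlinarith [Real.cosh_sub_sinh α, Real.exp_pos (-α)]
        have hs10 : 0 ≤ Real.sinh (1 / 10 : ℝ) :=
          (Real.sinh_pos_iff.mpr (by norm_num)).le
        have hcosh10 : Real.cosh (α + 1 / 10) ≤ Real.cosh α * Real.exp (1 / 10 : ℝ) := by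
          rw [Real.cosh_add, ← Real.cosh_add_sinh]
          nlinarith
        have hchvb : Real.cosh v < (10 / 9 : ℝ) * Real.cosh α := by
          nlinarith [Real.cosh_pos α]
        have hpos1 : 0 < Real.cosh α - Real.cos δ * Real.cosh v := by
          have := mul_le_mul_of_nonneg_right hc1 hch.le
          nlinarith [Real.cosh_pos α]
        have hterm2 : 0 < (v - α) * Real.sin δ * Real.sinh v :=
          mul_pos (mul_pos (by linarith) hsδ0) hsh
        linarith [mul_pos hδ0 hpos1, hterm2]
  refine ⟨ε, hεpos, core, ?_⟩
  intro w v h1 h2 h3 h4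
  have hneg := core (Real.pi - w) v (by linarith) (by linarith) h3 h4
  rw [hF] at hneg ⊢
  rw [Real.sin_pi_sub, Real.cos_pi_sub] at hneg
  linarith [hneg]
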